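/- With the data derived from a fixed reduced election E_{C'} as described in the context (where score_{E_{C'}}(w) and score_{E_{C'}}(p) denote the scores under the given short scoring rule), let M be any matching in the auxiliary bipartite graph G that covers every class in 𝒬̂ and every non-secure party in 𝒫 \ {P, P_w}. Let C_M consist of p, w, for each edge (P̃, Q) ∈ M one candidate of P̃ that is well placed for Q, and for each party of 𝒫 \ {P, P_w} not covered by M one safe candidate of that party. Then C_M is a nominee set, and the scores in the corresponding reduced election satisfy score_{E_{C_M}}(p) ≤ score_{E_{C'}}(p) and score_{E_{C_M}}(w) ≥ score_{E_{C'}}(w). In particular, if score_{E_{C'}}(w) > score_{E_{C'}}(p), then p is not a winner of E_{C_M}. -/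

import Mathlib

open scoped Classical

noncomputable section

/-- The position (`0`-based) coupled with voter type `i` in `Q⁺`: the unique
`j < ℓ` with `(i,j) ∈ Q`, or the sentinel value `ℓ` if there is none. -/
def qrank {τ ℓ : ℕ} (Q : Finset (Fin τ × Fin ℓ)) (i : Fin τ) : ℕ :=
  if h : ∃ j : Fin ℓ, (i, j) ∈ Q then (Classical.choose h).val else ℓ

/-- `c` is well placed (with respect to `p` and `w`) for the class `Q`, where
`Qp` and `Qw` are the classes of the parties of `p` and of `w`. -/
def WellPlaced {C : Type*} {τ ℓ : ℕ} (tpref : Fin τ → C → C → Prop) (p w : C)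
    (Qp Qw : Finset (Fin τ × Fin ℓ)) (c : C) (Q : Finset (Fin τ × Fin ℓ)) : Prop :=
  ∀ i : Fin τ,
    ((qrank Q i = ℓ ∧ qrank Qp i = ℓ) ∨ (tpref i c p ↔ qrank Q i < qrank Qp i)) ∧
    ((qrank Q i = ℓ ∧ qrank Qw i = ℓ) ∨ (tpref i c w ↔ qrank Q i < qrank Qw i))

/-- `c` is safe: every voter type that awards points to `w` prefers `w` to `c`. -/
def Safe {C : Type*} {τ ℓ : ℕ} (tpref : Fin τ → C → C → Prop) (w : C)
    (Qw : Finset (Fin τ × Fin ℓ)) (c : C) : Prop :=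
  ∀ i : Fin τ, qrank Qw i ≠ ℓ → tpref i w c

/-- The class of all positions occupied by the party `Pt`. -/
def Qclass {C : Type*} {τ ℓ : ℕ} (prt : Fin τ → Fin ℓ → Finset C)
    (Pt : Finset C) : Finset (Fin τ × Fin ℓ) :=
  Finset.univ.filter fun ij => prt ij.1 ij.2 = Pt

/-- `𝒬̂`: the classes of the structure of the reduced election other than the
classes of the parties of `p` and of `w`. -/
def Qhat {C : Type*} {τ ℓ : ℕ} (prt : Fin τ → Fin ℓ → Finset C)
    (P Pw : Finset C) : Finset (Finset (Fin τ × Fin ℓ)) :=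
  (Finset.univ.filter fun ij : Fin τ × Fin ℓ =>
      prt ij.1 ij.2 ≠ P ∧ prt ij.1 ij.2 ≠ Pw).image
    fun ij => Qclass prt (prt ij.1 ij.2)

/-- Score of `c` over the nominee set `C'` for the scoring vector `(a 0, a 1, …)`,
where `a j` is the number of points a voter gives to a candidate preceded by
exactly `j` nominees in her preference order. -/
def posScore {C V : Type*} [Fintype V] (a : ℕ → ℤ) (pref : V → C → C → Prop)
    (C' : Finset C) (c : C) : ℤ :=
  ∑ v : V, a ((C'.filter fun c' => pref v c' c).card)

/-- `C'` contains exactly one nominee of each party of `Ps`. -/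
def IsNomineeSet {C : Type*} (Ps : Finset (Finset C)) (C' : Finset C) : Prop :=
  ∀ Pt ∈ Ps, (C' ∩ Pt).card = 1

/-- `Ps` is a partition of the candidate set into nonempty parties. -/
def IsPartition {C : Type*} [Fintype C] (Ps : Finset (Finset C)) : Prop :=
  (∀ Pt ∈ Ps, Pt.Nonempty) ∧ ∀ c : C, ∃! Pt, Pt ∈ Ps ∧ c ∈ Pt

section Helpers

variable {C : Type*}

lemma rank_lt_rank_iff {σ : C → C → Prop} (hso : IsStrictTotalOrder C σ)
    {S : Finset C} {c d : C} (hc : c ∈ S) (hd : d ∈ S) :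
    (S.filter fun x => σ x c).card < (S.filter fun x => σ x d).card ↔ σ c d := by
  have key : ∀ c d : C, c ∈ S → d ∈ S → σ c d →
      (S.filter fun x => σ x c).card < (S.filter fun x => σ x d).card := by
    intro c d hc hd hcd
    apply Finset.card_lt_card
    constructor
    · intro x hx
      simp only [Finset.mem_filter] at *
      exact ⟨hx.1, hso.trans _ _ _ hx.2 hcd⟩
    · intro hsub
      have : c ∈ S.filter fun x => σ x c := hsub (by simp [Finset.mem_filter, hc, hcd])
      simp only [Finset.mem_filter] at this
      exact hso.irrefl c this.2
  constructor
  · intro h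
    rcases (or_iff_not_imp_left.2 fun h1 => or_iff_not_imp_right.2 fun h2 => hso.trichotomous c d h1 h2) with h' | rfl | h'
    · exact h'
    · omega
    · exact absurd (key d c hd hc h') (by omega)
  · exact key c d hc hd

lemma rank_inj {σ : C → C → Prop} (hso : IsStrictTotalOrder C σ)
    {S : Finset C} {c d : C} (hc : c ∈ S) (hd : d ∈ S)
    (h : (S.filter fun x => σ x c).card = (S.filter fun x => σ x d).card) : c = d := by
  rcases (or_iff_not_imp_left.2 fun h1 => or_iff_not_imp_right.2 fun h2 => hso.trichotomous c d h1 h2) with h' | rfl | h'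
  · exact absurd ((rank_lt_rank_iff hso hc hd).2 h') (by omega)
  · rfl
  · exact absurd ((rank_lt_rank_iff hso hd hc).2 h') (by omega)

lemma qrank_eq_of_mem {τ ℓ : ℕ} {Q : Finset (Fin τ × Fin ℓ)} {i : Fin τ} {j : Fin ℓ}
    (hmem : (i, j) ∈ Q) (huniq : ∀ j' : Fin ℓ, (i, j') ∈ Q → j' = j) :
    qrank Q i = j.val := by
  have h : ∃ j : Fin ℓ, (i, j) ∈ Q := ⟨j, hmem⟩
  unfold qrank
  rw [dif_pos h]
  exact congrArg Fin.val (huniq _ (Classical.choose_spec h))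

lemma qrank_eq_top {τ ℓ : ℕ} {Q : Finset (Fin τ × Fin ℓ)} {i : Fin τ}
    (h : ∀ j : Fin ℓ, (i, j) ∉ Q) : qrank Q i = ℓ := by
  unfold qrank
  rw [dif_neg]
  rintro ⟨j, hj⟩
  exact h j hj

lemma qrank_mem_of_ne_top {τ ℓ : ℕ} {Q : Finset (Fin τ × Fin ℓ)} {i : Fin τ}
    (h : qrank Q i ≠ ℓ) : ∃ j : Fin ℓ, j.val = qrank Q i ∧ (i, j) ∈ Q := by
  by_cases hex : ∃ j : Fin ℓ, (i, j) ∈ Q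
  · refine ⟨Classical.choose hex, ?_, Classical.choose_spec hex⟩
    unfold qrank
    rw [dif_pos hex]
  · exact absurd (qrank_eq_top (by push_neg at hex; exact hex)) h

lemma mem_Qclass {τ ℓ : ℕ} {prt : Fin τ → Fin ℓ → Finset C} {Pt : Finset C}
    {i : Fin τ} {j : Fin ℓ} : (i, j) ∈ Qclass prt Pt ↔ prt i j = Pt := by
  simp [Qclass]

lemma mem_Qhat {τ ℓ : ℕ} {prt : Fin τ → Fin ℓ → Finset C} {P Pw : Finset C}
    {Q : Finset (Fin τ × Fin ℓ)} : Q ∈ Qhat prt P Pw ↔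
      ∃ i j, prt i j ≠ P ∧ prt i j ≠ Pw ∧ Q = Qclass prt (prt i j) := by
  simp only [Qhat, Finset.mem_image, Finset.mem_filter, Finset.mem_univ, true_and]
  constructor
  · rintro ⟨⟨i, j⟩, ⟨h1, h2⟩, rfl⟩; exact ⟨i, j, h1, h2, rfl⟩
  · rintro ⟨i, j, h1, h2, rfl⟩; exact ⟨(i, j), ⟨h1, h2⟩, rfl⟩

lemma card_fin_lt (ℓ r : ℕ) :
    ((Finset.univ : Finset (Fin ℓ)).filter fun j => j.val < r).card = min ℓ r := by
  rw [← Finset.card_range (min ℓ r)]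
  apply Finset.card_bij (fun j _ => j.val)
  · intro j hj
    simp only [Finset.mem_filter, Finset.mem_univ, true_and] at hj
    simp only [Finset.mem_range]
    omega
  · intro j1 h1 j2 h2 h
    exact Fin.ext h
  · intro n hn
    simp only [Finset.mem_range] at hn
    exact ⟨⟨n, by omega⟩, by simp; omega, rfl⟩

end Helpers
/-- nominating along a matching `μ` that covers all classes of `𝒬̂`
and all non-secure parties (schematically, a well-placed candidate for matched
parties and a safe candidate for unmatched parties) yields a nominee set on which
`p` scores no more, and `w` no less, than in the fixed reduced election `E_{C'}`;
in particular if `w` beats `p` in `E_{C'}`, then `p` is not a winner. -/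
theorem matching_nomination_short_rule
    {C V : Type*} [Fintype C] [Fintype V]
    (τ ℓ : ℕ) (hℓ : 1 ≤ ℓ)
    -- the scoring vector `(a_1, …, a_ℓ, 0, …, 0)` with `a_1 ≥ … ≥ a_ℓ > 0`
    (a : ℕ → ℤ)
    (hanti : ∀ i j : ℕ, i ≤ j → j < ℓ → a j ≤ a i)
    (hpos : 0 < a (ℓ - 1))
    (hzero : ∀ j : ℕ, ℓ ≤ j → a j = 0)
    -- the voters, their types, and their preference orders
    (pref : V → C → C → Prop)
    (typ : V → Fin τ) (htypsurj : Function.Surjective typ)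
    (tpref : Fin τ → C → C → Prop)
    (hlin : ∀ i : Fin τ, IsStrictTotalOrder C (tpref i))
    (htyp : ∀ v : V, pref v = tpref (typ v))
    (htypdist : ∀ i i' : Fin τ, tpref i = tpref i' → i = i')
    -- the parties
    (Ps : Finset (Finset C)) (hpart : IsPartition Ps)
    (P Pw : Finset C) (hP : P ∈ Ps) (hPw : Pw ∈ Ps) (hPPw : P ≠ Pw)
    (p w : C) (hp : p ∈ P) (hw : w ∈ Pw)
    -- the fixed reduced election `E_{C'}`
    (C' : Finset C) (hC' : IsNomineeSet Ps C') (hpC' : p ∈ C') (hwC' : w ∈ C')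
    -- `prt i j` is the party of the nominee at position `j` in the restricted
    -- order of type-`i` voters in `E_{C'}`
    (prt : Fin τ → Fin ℓ → Finset C)
    (hprt : ∀ (i : Fin τ) (j : Fin ℓ), prt i j ∈ Ps ∧
      ∃ c ∈ C', c ∈ prt i j ∧ (C'.filter fun c' => tpref i c' c).card = j.val)
    -- `μ` is a matching of the auxiliary bipartite graph covering every class of
    -- `𝒬̂` and every non-secure party
    (μ : Finset (Fin τ × Fin ℓ) → Finset C)
    (hμedge : ∀ Q ∈ Qhat prt P Pw, μ Q ∈ Ps ∧ μ Q ≠ P ∧ μ Q ≠ Pw ∧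
      ∃ c ∈ μ Q, WellPlaced tpref p w (Qclass prt P) (Qclass prt Pw) c Q)
    (hμinj : ∀ Q ∈ Qhat prt P Pw, ∀ Q' ∈ Qhat prt P Pw, μ Q = μ Q' → Q = Q')
    (hμcover : ∀ Pt ∈ Ps, Pt ≠ P → Pt ≠ Pw →
      (¬ ∃ c ∈ Pt, Safe tpref w (Qclass prt Pw) c) →
      ∃ Q ∈ Qhat prt P Pw, μ Q = Pt)
    -- the nominations determined by the matching
    (nom : Finset C → C)
    (hnomP : nom P = p) (hnomPw : nom Pw = w)
    (hnommem : ∀ Pt ∈ Ps, nom Pt ∈ Pt)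
    (hnommatched : ∀ Q ∈ Qhat prt P Pw,
      WellPlaced tpref p w (Qclass prt P) (Qclass prt Pw) (nom (μ Q)) Q)
    (hnomfree : ∀ Pt ∈ Ps, Pt ≠ P → Pt ≠ Pw →
      (∀ Q ∈ Qhat prt P Pw, μ Q ≠ Pt) →
      Safe tpref w (Qclass prt Pw) (nom Pt)) :
    IsNomineeSet Ps (Ps.image nom) ∧
    posScore a pref (Ps.image nom) p ≤ posScore a pref C' p ∧
    posScore a pref C' w ≤ posScore a pref (Ps.image nom) w ∧
    (posScore a pref C' p < posScore a pref C' w →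
      ∃ c ∈ Ps.image nom,
        posScore a pref (Ps.image nom) p < posScore a pref (Ps.image nom) c) := by
  classical
  obtain ⟨hne, huniq⟩ := hpart
  have hdisj : ∀ Pt ∈ Ps, ∀ Pt' ∈ Ps, ∀ c : C, c ∈ Pt → c ∈ Pt' → Pt = Pt' := by
    intro Pt hPt Pt' hPt' c hc hc'
    obtain ⟨U, _, hU⟩ := huniq c
    rw [hU Pt ⟨hPt, hc⟩, hU Pt' ⟨hPt', hc'⟩]
  have hnominj : Set.InjOn nom Ps := by
    intro Pt hPt Pt' hPt' h
    exact hdisj _ hPt _ hPt' (nom Pt) (hnommem _ hPt) (h ▸ hnommem _ hPt')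
  have hCmem : ∀ Pt ∈ Ps, ∀ c ∈ C', c ∈ Pt → ∀ c' ∈ C', c' ∈ Pt → c = c' := by
    intro Pt hPt c hc hcPt c' hc' hc'Pt
    have h1 := hC' Pt hPt
    rw [Finset.card_eq_one] at h1
    obtain ⟨x, hx⟩ := h1
    have hcx : c ∈ C' ∩ Pt := Finset.mem_inter.2 ⟨hc, hcPt⟩
    have hcx' : c' ∈ C' ∩ Pt := Finset.mem_inter.2 ⟨hc', hc'Pt⟩
    rw [hx, Finset.mem_singleton] at hcx hcx'
    rw [hcx, hcx']
  have hNnom : IsNomineeSet Ps (Ps.image nom) := by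
    intro Pt hPt
    have heq : (Ps.image nom) ∩ Pt = {nom Pt} := by
      ext c
      simp only [Finset.mem_inter, Finset.mem_image, Finset.mem_singleton]
      constructor
      · rintro ⟨⟨Pt', hPt', rfl⟩, hcPt⟩
        rw [hdisj _ hPt' _ hPt _ (hnommem _ hPt') hcPt]
      · rintro rfl
        exact ⟨⟨Pt, hPt, rfl⟩, hnommem _ hPt⟩
    rw [heq, Finset.card_singleton]
  have amono : ∀ m n : ℕ, m ≤ n → a n ≤ a m := by
    intro m n hmn
    by_cases hn : n < ℓ
    · exact hanti m n hmn hn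
    · rw [hzero n (by omega)]
      by_cases hm : m < ℓ
      · have := hanti m (ℓ - 1) (by omega) (by omega)
        omega
      · rw [hzero m (by omega)]
  have apos : ∀ n : ℕ, 0 ≤ a n := by
    intro n
    by_cases hn : n < ℓ
    · have := hanti n (ℓ - 1) (by omega) (by omega); omega
    · rw [hzero n (by omega)]
  have prtuniq : ∀ (i : Fin τ) (j j' : Fin ℓ), prt i j = prt i j' → j = j' := by
    intro i j j' h
    obtain ⟨hPs, c, hcC', hcPt, hcr⟩ := hprt i j
    obtain ⟨hPs', c', hc'C', hc'Pt, hc'r⟩ := hprt i j'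
    rw [h] at hcPt
    have hcc : c = c' := hCmem _ hPs' c hcC' hcPt c' hc'C' hc'Pt
    subst hcc
    exact Fin.ext (by omega)
  have F2 : ∀ (i : Fin τ), ∀ Pt ∈ Ps, ∀ c ∈ C', c ∈ Pt → ∀ j : Fin ℓ,
      (prt i j = Pt ↔ (C'.filter fun c' => tpref i c' c).card = j.val) := by
    intro i Pt hPt c hcC' hcPt j
    obtain ⟨hPs, c', hc'C', hc'Pt, hc'r⟩ := hprt i j
    constructor
    · intro h
      rw [h] at hc'Pt
      rw [hCmem _ hPt c hcC' hcPt c' hc'C' hc'Pt]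
      exact hc'r
    · intro h
      have hcc : c = c' := rank_inj (hlin i) hcC' hc'C' (by omega)
      subst hcc
      exact hdisj _ hPs _ hPt c hc'Pt hcPt
  have F3a : ∀ (i : Fin τ) (j : Fin ℓ) (Pt : Finset C), prt i j = Pt →
      qrank (Qclass prt Pt) i = j.val := by
    intro i j Pt h
    exact qrank_eq_of_mem (mem_Qclass.2 h)
      (fun j' hj' => prtuniq i j' j ((mem_Qclass.1 hj').trans h.symm))
  have F4 : ∀ (i : Fin τ), ∀ Pt ∈ Ps, ∀ c ∈ C', c ∈ Pt →
      qrank (Qclass prt Pt) i = min ((C'.filter fun c' => tpref i c' c).card) ℓ := by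
    intro i Pt hPt c hcC' hcPt
    by_cases h : (C'.filter fun c' => tpref i c' c).card < ℓ
    · rw [F3a i ⟨_, h⟩ Pt ((F2 i Pt hPt c hcC' hcPt ⟨_, h⟩).2 rfl)]
      simp
      omega
    · rw [qrank_eq_top]
      · omega
      · intro j hj
        have := (F2 i Pt hPt c hcC' hcPt j).1 (mem_Qclass.1 hj)
        omega
  have hrankN : ∀ (i : Fin τ) (c : C), ((Ps.image nom).filter fun x => tpref i x c).card
      = (Ps.filter fun Pt => tpref i (nom Pt) c).card := by
    intro i c
    rw [Finset.filter_image]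
    exact Finset.card_image_of_injOn
      (hnominj.mono (Finset.coe_subset.2 (Finset.filter_subset _ _)))
  have claimA : ∀ i : Fin τ, min ℓ ((C'.filter fun c' => tpref i c' p).card)
      ≤ (Ps.filter fun Pt => tpref i (nom Pt) p).card := by
    intro i
    rw [← card_fin_lt ℓ ((C'.filter fun c' => tpref i c' p).card)]
    have hjP : ∀ j : Fin ℓ, j.val < (C'.filter fun c' => tpref i c' p).card →
        prt i j ≠ P := by
      intro j hj h
      have := (F2 i P hP p hpC' hp j).1 h
      omega
    apply Finset.card_le_card_of_injOn
      (fun j => if prt i j = Pw then Pw else μ (Qclass prt (prt i j)))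
    · intro j hj
      simp only [Finset.mem_coe, Finset.mem_filter, Finset.mem_univ, true_and] at hj
      beta_reduce
      by_cases hjw : prt i j = Pw
      · rw [if_pos hjw]
        refine Finset.mem_filter.2 ⟨hPw, ?_⟩
        rw [hnomPw]
        have hrw := (F2 i Pw hPw w hwC' hw j).1 hjw
        exact (rank_lt_rank_iff (hlin i) hwC' hpC').1 (by omega)
      · rw [if_neg hjw]
        have hQ : Qclass prt (prt i j) ∈ Qhat prt P Pw :=
          mem_Qhat.2 ⟨i, j, hjP j hj, hjw, rfl⟩
        obtain ⟨hPs, hne1, hne2, _⟩ := hμedge _ hQ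
        refine Finset.mem_filter.2 ⟨hPs, ?_⟩
        have hwp := (hnommatched _ hQ i).1
        have hq1 : qrank (Qclass prt (prt i j)) i = j.val := F3a i j _ rfl
        have hq2 := F4 i P hP p hpC' hp
        rcases hwp with ⟨h1, _⟩ | h2
        · omega
        · exact h2.2 (by omega)
    · intro j1 h1 j2 h2 heq
      beta_reduce at heq
      simp only [Finset.coe_filter, Finset.mem_univ, Set.mem_setOf_eq, true_and] at h1 h2
      by_cases hw1 : prt i j1 = Pw <;> by_cases hw2 : prt i j2 = Pw
      · exact prtuniq i j1 j2 (hw1.trans hw2.symm)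
      · exfalso
        rw [if_pos hw1, if_neg hw2] at heq
        have hQ : Qclass prt (prt i j2) ∈ Qhat prt P Pw :=
          mem_Qhat.2 ⟨i, j2, hjP j2 h2, hw2, rfl⟩
        exact (hμedge _ hQ).2.2.1 heq.symm
      · exfalso
        rw [if_neg hw1, if_pos hw2] at heq
        have hQ : Qclass prt (prt i j1) ∈ Qhat prt P Pw :=
          mem_Qhat.2 ⟨i, j1, hjP j1 h1, hw1, rfl⟩
        exact (hμedge _ hQ).2.2.1 heq
      · rw [if_neg hw1, if_neg hw2] at heq
        have hQ1 : Qclass prt (prt i j1) ∈ Qhat prt P Pw :=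
          mem_Qhat.2 ⟨i, j1, hjP j1 h1, hw1, rfl⟩
        have hQ2 : Qclass prt (prt i j2) ∈ Qhat prt P Pw :=
          mem_Qhat.2 ⟨i, j2, hjP j2 h2, hw2, rfl⟩
        have hQQ := hμinj _ hQ1 _ hQ2 heq
        have : (i, j1) ∈ Qclass prt (prt i j2) := hQQ ▸ mem_Qclass.2 rfl
        exact prtuniq i j1 j2 (mem_Qclass.1 this)
  have claimB : ∀ i : Fin τ, (C'.filter fun c' => tpref i c' w).card < ℓ →
      (Ps.filter fun Pt => tpref i (nom Pt) w).card
        ≤ (C'.filter fun c' => tpref i c' w).card := by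
    intro i hs
    have hqw : qrank (Qclass prt Pw) i = (C'.filter fun c' => tpref i c' w).card := by
      have := F4 i Pw hPw w hwC' hw; omega
    have hforce : ∀ Pt ∈ Ps, tpref i (nom Pt) w →
        (¬ ∃ Q ∈ Qhat prt P Pw, μ Q = Pt) →
        Pt = P ∧ (C'.filter fun c' => tpref i c' p).card
          < (C'.filter fun c' => tpref i c' w).card := by
      intro Pt hPtPs hbeat hmatch
      have hPtnPw : Pt ≠ Pw := by
        rintro rfl; rw [hnomPw] at hbeat; exact (hlin i).irrefl w hbeat
      by_cases hPtP : Pt = P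
      · subst hPtP
        rw [hnomP] at hbeat
        exact ⟨rfl, (rank_lt_rank_iff (hlin i) hpC' hwC').2 hbeat⟩
      · exfalso
        push_neg at hmatch
        have hsafe := hnomfree Pt hPtPs hPtP hPtnPw hmatch
        have hwc := hsafe i (by omega)
        exact (hlin i).irrefl _ ((hlin i).trans _ _ _ hbeat hwc)
    have hmlt : ∀ Pt ∈ Ps, tpref i (nom Pt) w →
        ∀ hm : ∃ Q ∈ Qhat prt P Pw, μ Q = Pt,
        qrank hm.choose i < (C'.filter fun c' => tpref i c' w).card := by
      intro Pt hPtPs hbeat hm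
      obtain ⟨hQmem, hQμ⟩ := hm.choose_spec
      have hwp := (hnommatched _ hQmem i).2
      rw [hQμ] at hwp
      rcases hwp with ⟨h1, h2⟩ | h2
      · omega
      · have := h2.1 hbeat; omega
    rw [← Finset.card_range ((C'.filter fun c' => tpref i c' w).card)]
    apply Finset.card_le_card_of_injOn
      (fun Pt => if h : ∃ Q ∈ Qhat prt P Pw, μ Q = Pt then qrank h.choose i
        else qrank (Qclass prt P) i)
    · intro Pt hPt
      simp only [Finset.mem_coe, Finset.mem_filter] at hPt
      obtain ⟨hPtPs, hbeat⟩ := hPt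
      simp only [Finset.mem_coe, Finset.mem_range]
      by_cases hmatch : ∃ Q ∈ Qhat prt P Pw, μ Q = Pt
      · rw [dif_pos hmatch]
        exact hmlt Pt hPtPs hbeat hmatch
      · rw [dif_neg hmatch]
        obtain ⟨-, hlt⟩ := hforce Pt hPtPs hbeat hmatch
        have hq2 := F4 i P hP p hpC' hp
        omega
    · intro Pt1 h1 Pt2 h2 heq
      beta_reduce at heq
      simp only [Finset.coe_filter, Set.mem_setOf_eq] at h1 h2
      by_cases hm1 : ∃ Q ∈ Qhat prt P Pw, μ Q = Pt1 <;>
        by_cases hm2 : ∃ Q ∈ Qhat prt P Pw, μ Q = Pt2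
      · rw [dif_pos hm1, dif_pos hm2] at heq
        obtain ⟨hQ1mem, hQ1μ⟩ := hm1.choose_spec
        obtain ⟨hQ2mem, hQ2μ⟩ := hm2.choose_spec
        have hlt1 := hmlt Pt1 h1.1 h1.2 hm1
        have hlt2 := hmlt Pt2 h2.1 h2.2 hm2
        obtain ⟨j1, hj1v, hj1m⟩ := qrank_mem_of_ne_top
          (Q := hm1.choose) (i := i) (by omega)
        obtain ⟨j2, hj2v, hj2m⟩ := qrank_mem_of_ne_top
          (Q := hm2.choose) (i := i) (by omega)
        have hjj : j1 = j2 := Fin.ext (by omega)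
        obtain ⟨i1, k1, -, -, hQ1eq⟩ := mem_Qhat.1 hQ1mem
        obtain ⟨i2, k2, -, -, hQ2eq⟩ := mem_Qhat.1 hQ2mem
        rw [hQ1eq] at hj1m
        rw [hQ2eq] at hj2m
        have hprt1 := mem_Qclass.1 hj1m
        have hprt2 := mem_Qclass.1 hj2m
        have : hm1.choose = hm2.choose := by
          rw [hQ1eq, hQ2eq, ← hprt1, ← hprt2, hjj]
        rw [← hQ1μ, ← hQ2μ, this]
      · exfalso
        rw [dif_pos hm1, dif_neg hm2] at heq
        obtain ⟨-, hlt⟩ := hforce Pt2 h2.1 h2.2 hm2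
        obtain ⟨hQ1mem, hQ1μ⟩ := hm1.choose_spec
        have hlt1 := hmlt Pt1 h1.1 h1.2 hm1
        obtain ⟨j1, hj1v, hj1m⟩ := qrank_mem_of_ne_top
          (Q := hm1.choose) (i := i) (by omega)
        obtain ⟨i1, k1, hk1P, -, hQ1eq⟩ := mem_Qhat.1 hQ1mem
        rw [hQ1eq] at hj1m
        have hprt1 := mem_Qclass.1 hj1m
        have hq2 := F4 i P hP p hpC' hp
        have hjP : prt i j1 = P := by
          apply (F2 i P hP p hpC' hp j1).2
          omega
        exact hk1P (hprt1 ▸ hjP)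
      · exfalso
        rw [dif_neg hm1, dif_pos hm2] at heq
        obtain ⟨-, hlt⟩ := hforce Pt1 h1.1 h1.2 hm1
        obtain ⟨hQ2mem, hQ2μ⟩ := hm2.choose_spec
        have hlt2 := hmlt Pt2 h2.1 h2.2 hm2
        obtain ⟨j2, hj2v, hj2m⟩ := qrank_mem_of_ne_top
          (Q := hm2.choose) (i := i) (by omega)
        obtain ⟨i2, k2, hk2P, -, hQ2eq⟩ := mem_Qhat.1 hQ2mem
        rw [hQ2eq] at hj2m
        have hprt2 := mem_Qclass.1 hj2m
        have hq2 := F4 i P hP p hpC' hp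
        have hjP : prt i j2 = P := by
          apply (F2 i P hP p hpC' hp j2).2
          omega
        exact hk2P (hprt2 ▸ hjP)
      · exact (hforce Pt1 h1.1 h1.2 hm1).1.trans (hforce Pt2 h2.1 h2.2 hm2).1.symm
  have hsP : posScore a pref (Ps.image nom) p ≤ posScore a pref C' p := by
    apply Finset.sum_le_sum
    intro v _
    rw [htyp v, hrankN (typ v) p]
    have h := claimA (typ v)
    by_cases hcase : (C'.filter fun c' => tpref (typ v) c' p).card < ℓ
    · exact amono _ _ (by omega)
    · rw [hzero _ (by omega), hzero _ (by omega)]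
  have hsW : posScore a pref C' w ≤ posScore a pref (Ps.image nom) w := by
    apply Finset.sum_le_sum
    intro v _
    rw [htyp v, hrankN (typ v) w]
    by_cases hcase : (C'.filter fun c' => tpref (typ v) c' w).card < ℓ
    · exact amono _ _ (claimB (typ v) hcase)
    · rw [hzero _ (by omega)]
      exact apos _
  refine ⟨hNnom, hsP, hsW, fun hlt => ⟨w, Finset.mem_image.2 ⟨Pw, hPw, hnomPw⟩, ?_⟩⟩
  linarith
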